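/- Let R be a left Ore ring with classical left ring of quotients Q, and assume Q is injective as a left R-module. Then for every finitely generated projective left R-module P: the natural map P → Q ⊗_R P is injective, its image is an essential R-submodule of Q ⊗_R P, and Q ⊗_R P is an injective left R-module; consequently Q ⊗_R P is an injective envelope of P. (For a finite von Neumann algebra A with algebra of affiliated operators U = Q_cl(A), which is injective over A, this gives U ⊗_A P = E(P) for every finitely generated projective A-module P.) -/

import Mathlib

universe u

open OreLocalization

/-- The submonoid of regular elements (two-sided non-zero-divisors) of a ring. -/
def regulars (R : Type u) [Ring R] : Submonoid R :=
  nonZeroDivisorsLeft R ⊓ nonZeroDivisorsRight R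

/-- The natural localization map `M → M[S⁻¹]`, `m ↦ m /ₒ 1`; under the canonical
identification `M[S⁻¹] ≅ Q ⊗_R M` (`Q = R[S⁻¹]`) it is the natural map
`M → Q ⊗_R M`. -/
def mkLinearMap {R : Type u} [Ring R] {S : Submonoid R} [OreSet S]
    (M : Type u) [AddCommGroup M] [Module R M] :
    M →ₗ[R] OreLocalization S M where
  toFun m := m /ₒ (1 : S)
  map_add' _ _ := (add_oreDiv).symm
  map_smul' r m := by
    simp only [RingHom.id_apply]
    rw [← OreLocalization.smul_div_one, OreLocalization.oreDiv_one_smul]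

section Helpers

variable {R : Type u} [Ring R] {S : Submonoid R} [OreSet S]
variable {P : Type u} [AddCommGroup P] [Module R P]

/-- `m ↦ m /ₒ s` as an additive homomorphism. -/
def oreDivAddHom (M : Type u) [AddCommGroup M] [Module R M] (s : S) :
    M →+ OreLocalization S M where
  toFun m := m /ₒ s
  map_zero' := zero_oreDiv s
  map_add' _ _ := (add_oreDiv).symm

/-- Localization of a linear map into a finite free module. -/
def toPi {n : ℕ} (i : P →ₗ[R] (Fin n → R)) :
    OreLocalization S P →ₗ[R] (Fin n → OreLocalization S R) where
  toFun := liftExpand (fun p s => fun k => i p k /ₒ s) (by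
    intro p t s ht
    funext k
    show i p k /ₒ s = i (t • p) k /ₒ ⟨t * s, ht⟩
    rw [OreLocalization.expand (i p k) s t ht]
    congr 1
    rw [map_smul]
    rfl)
  map_add' x y := by
    induction' x using OreLocalization.ind with p s
    induction' y using OreLocalization.ind with q s'
    have h : (oreDenom (s : R) s' : R) * s = oreNum (s : R) s' * s' := ore_eq (s : R) s'
    rw [oreDiv_add_char s s' (oreNum (s : R) s') (oreDenom (s : R) s') h, liftExpand_of]
    funext k
    simp only [liftExpand_of, Pi.add_apply]
    rw [oreDiv_add_char s s' (oreNum (s : R) s') (oreDenom (s : R) s') h]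
    congr 1
    simp [Submonoid.smul_def, map_add, map_smul]
  map_smul' r x := by
    induction' x using OreLocalization.ind with p s
    obtain ⟨r', s', h⟩ := oreCondition r s
    simp only [RingHom.id_apply]
    rw [← oreDiv_one_smul (r : R) (p /ₒ s),
      oreDiv_smul_char r p 1 s r' s' h, liftExpand_of]
    funext k
    simp only [liftExpand_of, Pi.smul_apply]
    rw [← oreDiv_one_smul (r : R) (i p k /ₒ s), oreDiv_smul_char r (i p k) 1 s r' s' h]
    congr 1
    rw [map_smul]
    rfl

@[simp] theorem toPi_oreDiv {n : ℕ} (i : P →ₗ[R] (Fin n → R)) (p : P) (s : S) :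
    toPi i (p /ₒ s) = fun k => i p k /ₒ s := rfl

/-- Map back from the localized free module, determined by a retraction `π`. -/
def fromPi {n : ℕ} (π : (Fin n → R) →ₗ[R] P) :
    (Fin n → OreLocalization S R) →ₗ[R] OreLocalization S P where
  toFun g := ∑ k, g k • (π (Pi.single k 1) /ₒ (1 : S))
  map_add' g g' := by
    simp [add_smul, Finset.sum_add_distrib]
  map_smul' r g := by
    simp only [RingHom.id_apply, Pi.smul_apply, Finset.smul_sum]
    refine Finset.sum_congr rfl fun k _ => ?_
    rw [smul_assoc]

theorem fromPi_toPi {n : ℕ} (i : P →ₗ[R] (Fin n → R)) (π : (Fin n → R) →ₗ[R] P)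
    (h : ∀ p, π (i p) = p) (x : OreLocalization S P) : fromPi π (toPi i x) = x := by
  induction' x using OreLocalization.ind with p s
  show (∑ k, (i p k /ₒ s) • (π (Pi.single k 1) /ₒ (1 : S))) = p /ₒ s
  have : ∀ k : Fin n, (i p k /ₒ s) • (π (Pi.single k 1) /ₒ (1 : S))
      = (i p k • π (Pi.single k 1)) /ₒ s := fun k => OreLocalization.smul_div_one
  rw [Finset.sum_congr rfl fun k _ => this k]
  have hsum : (∑ k, i p k • π (Pi.single k 1)) /ₒ s
      = ∑ k, (i p k • π (Pi.single k 1)) /ₒ s :=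
    map_sum (oreDivAddHom P s) (fun k => i p k • π (Pi.single k 1)) Finset.univ
  rw [← hsum]
  congr 1
  have : (∑ k, i p k • π (Pi.single k 1)) = π (∑ k, i p k • (Pi.single k 1 : Fin n → R)) := by
    rw [map_sum]
    exact Finset.sum_congr rfl fun k _ => (map_smul π _ _).symm
  rw [this]
  have : (∑ k, i p k • (Pi.single k 1 : Fin n → R)) = i p := by
    have : ∀ k : Fin n, i p k • (Pi.single k 1 : Fin n → R) = Pi.single k (i p k) := by
      intro k
      rw [← Pi.single_smul, smul_eq_mul, mul_one]
    rw [Finset.sum_congr rfl fun k _ => this k, Finset.univ_sum_single]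
  rw [this, h]

theorem injective_of_retract {A B : Type u} [AddCommGroup A] [Module R A]
    [AddCommGroup B] [Module R B] (ι : A →ₗ[R] B) (ρ : B →ₗ[R] A)
    (h : ∀ a, ρ (ι a) = a) (hB : Module.Injective R B) : Module.Injective R A := by
  constructor
  intro X Y _ _ _ _ f hf g
  obtain ⟨h', hh⟩ := hB.out f hf (ι ∘ₗ g)
  refine ⟨ρ ∘ₗ h', fun x => ?_⟩
  simp only [LinearMap.coe_comp, Function.comp_apply, hh x]
  exact h (g x)

theorem injective_pi {n : ℕ} {Q : Type u} [AddCommGroup Q] [Module R Q]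
    (hQ : Module.Injective R Q) : Module.Injective R (Fin n → Q) := by
  constructor
  intro X Y _ _ _ _ f hf g
  choose h hh using fun k : Fin n => hQ.out f hf ((LinearMap.proj k) ∘ₗ g)
  exact ⟨LinearMap.pi h, fun x => funext fun k => hh k x⟩

end Helpers

theorem tensor_with_quotient_ring_is_injective_envelope_of_fg_projective
    (R : Type u) [Ring R] [OreSet (regulars R)]
    -- Q = Q_cl(R) is injective as a left R-module
    (hQ : Module.Injective R (OreLocalization (regulars R) R))
    -- P is a finitely generated projective left R-module
    (P : Type u) [AddCommGroup P] [Module R P]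
    [Module.Finite R P] [Module.Projective R P] :
    -- the natural map P → Q ⊗_R P is injective,
    Function.Injective (mkLinearMap (R := R) (S := regulars R) P) ∧
    -- its image is an essential submodule of Q ⊗_R P,
    (∀ L : Submodule R (OreLocalization (regulars R) P), L ≠ ⊥ →
      L ⊓ LinearMap.range (mkLinearMap (R := R) (S := regulars R) P) ≠ ⊥) ∧
    -- and Q ⊗_R P is an injective R-module; hence Q ⊗_R P = E(P)
    Module.Injective R (OreLocalization (regulars R) P) := by
  classical
  -- split P as a retract of a finite free module
  obtain ⟨n, π, hπ⟩ := Module.Finite.exists_fin' R P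
  obtain ⟨i, hi⟩ := π.exists_rightInverse_of_surjective (LinearMap.range_eq_top.mpr hπ)
  have hretr : ∀ p : P, π (i p) = p := fun p => by rw [← LinearMap.comp_apply, hi]; rfl
  have hiinj : Function.Injective i := fun a b hab => by
    rw [← hretr a, ← hretr b, hab]
  -- key: p /ₒ 1 = 0 → p = 0
  have hker : ∀ p : P, (p /ₒ (1 : regulars R) : OreLocalization (regulars R) P) = 0 → p = 0 := by
    intro p hp
    rw [OreLocalization.zero_def, oreDiv_eq_iff] at hp
    obtain ⟨u, v, h1, h2⟩ := hp
    simp only [OneMemClass.coe_one, mul_one] at h2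
    rw [smul_zero] at h1
    have hv : v • p = 0 := h1.symm
    have hvreg : v ∈ nonZeroDivisorsLeft R := by
      rw [← h2]; exact (Submonoid.mem_inf.mp u.2).1
    have : i p = 0 := by
      funext k
      have : v • i p = 0 := by rw [← map_smul, hv, map_zero]
      have hk : v * i p k = 0 := congrFun this k
      exact ((mem_nonZeroDivisorsLeft_iff (M₀ := R)).mp hvreg) _ hk
    exact hiinj (by rw [this, map_zero])
  have hinj : Function.Injective (mkLinearMap (R := R) (S := regulars R) P) := by
    intro a b hab
    have : ((a - b) /ₒ (1 : regulars R) : OreLocalization (regulars R) P) = 0 := by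
      have := map_sub (mkLinearMap (R := R) (S := regulars R) P) a b
      show mkLinearMap (R := R) (S := regulars R) P (a - b) = 0
      rw [this, hab, sub_self]
    have := hker _ this
    exact sub_eq_zero.mp this
  refine ⟨hinj, ?_, ?_⟩
  · -- essentiality
    intro L hL
    obtain ⟨x, hxL, hx0⟩ := Submodule.exists_mem_ne_zero_of_ne_bot hL
    induction' x using OreLocalization.ind with p s
    refine Submodule.ne_bot_iff _ |>.mpr ⟨p /ₒ (1 : regulars R), ?_, ?_⟩
    · refine Submodule.mem_inf.mpr ⟨?_, ⟨p, rfl⟩⟩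
      have : ((s : R) • (p /ₒ s) : OreLocalization (regulars R) P) = p /ₒ (1 : regulars R) := by
        rw [← oreDiv_one_smul (s : R) (p /ₒ s)]
        exact OreLocalization.smul_cancel
      rw [← this]
      exact L.smul_mem _ hxL
    · intro h0
      exact hx0 (by rw [hker p h0, zero_oreDiv])
  · -- injectivity of the localization
    exact injective_of_retract (toPi i) (fromPi π) (fromPi_toPi i π hretr) (injective_pi hQ)
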